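/- arXiv:2407.01184 — 2 statements merged into one kernel-verified Lean document; each statement's English description precedes it below -/
import Mathlib

section
/- Let d ≥ 1, let σ∥ and v (the tangential traction and the increment of the tangential displacement jump) be vectors in the Euclidean space ℝ^d, let b > 0 (the friction bound) and c > 0 be real numbers. Define the tangential complementarity function C∥ = σ∥ · max(b, ‖σ∥ + c·v‖) - b·(σ∥ + c·v) (a vector in ℝ^d, where the first term is scalar multiplication). Then C∥ = 0 if and only if either (stick) v = 0 and ‖σ∥‖ ≤ b, or (slip) v ≠ 0 and σ∥ = (b/‖v‖)·v. -/
/-- The tangential complementarity function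
`C∥ = max(b, ‖σ∥ + c v‖) • σ∥ - b • (σ∥ + c v)` vanishes iff the fracture cell
is sticking (`v = 0` and `‖σ∥‖ ≤ b`) or slipping (`v ≠ 0` and
`σ∥ = (b/‖v‖) • v`). -/
theorem tangential_complementarity_iff_stick_or_slip
    (d : ℕ) (hd : 1 ≤ d) (σ v : EuclideanSpace ℝ (Fin d)) (b c : ℝ)
    (hb : 0 < b) (hc : 0 < c) :
    (max b ‖σ + c • v‖) • σ - b • (σ + c • v) = 0 ↔
      (v = 0 ∧ ‖σ‖ ≤ b) ∨ (v ≠ 0 ∧ σ = (b / ‖v‖) • v) := by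
  set m : ℝ := max b ‖σ + c • v‖ with hm
  have hbm : b ≤ m := le_max_left _ _
  constructor
  · intro h
    have key : (m - b) • σ = (b * c) • v := by
      have h' : m • σ = b • (σ + c • v) := sub_eq_zero.mp h
      have : m • σ - b • σ = b • (c • v) := by
        rw [smul_add] at h'
        rw [h']; abel
      rw [sub_smul, this, smul_smul]
    by_cases hv : v = 0
    · left
      refine ⟨hv, ?_⟩
      by_cases hσ : σ = 0
      · simp [hσ, hb.le]
      · have hmb : m = b := by
          have : (m - b) • σ = 0 := by rw [key, hv, smul_zero]
          rcases smul_eq_zero.mp this with h1 | h1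
          · linarith [sub_eq_zero.mp h1]
          · exact absurd h1 hσ
        have : max b ‖σ‖ = b := by
          rw [hm, hv, smul_zero, add_zero] at hmb; exact hmb
        exact (max_eq_left_iff.mp this)
    · right
      refine ⟨hv, ?_⟩
      have hvn : (0:ℝ) < ‖v‖ := norm_pos_iff.mpr hv
      have hmb : b < m := by
        rcases lt_or_eq_of_le hbm with h1 | h1
        · exact h1
        · exfalso
          have : (b * c) • v = 0 := by rw [← key, ← h1, sub_self, zero_smul]
          rcases smul_eq_zero.mp this with h2 | h2
          · nlinarith
          · exact hv h2
      have hσv : σ = ((b * c) / (m - b)) • v := by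
        have hne : m - b ≠ 0 := by linarith
        have := congrArg (fun x => (m - b)⁻¹ • x) key
        simp only [smul_smul, inv_mul_cancel₀ hne, one_smul] at this
        rw [this]
        congr 1
        ring
      have hmeq : m = ‖σ + c • v‖ := by
        rcases max_choice b ‖σ + c • v‖ with h1 | h1
        · rw [← hm] at h1; linarith
        · rw [← hm] at h1; exact h1
      have hne : m - b ≠ 0 := by linarith
      have hsum : σ + c • v = ((c * m) / (m - b)) • v := by
        rw [hσv, ← add_smul]
        congr 1
        field_simp
        ring
      have hmpos : 0 < m := lt_trans hb hmb
      have hcoef : 0 < (c * m) / (m - b) :=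
        div_pos (mul_pos hc hmpos) (by linarith)
      have hnorm : m = (c * m) / (m - b) * ‖v‖ := by
        have h2 := hmeq
        rw [hsum, norm_smul, Real.norm_eq_abs, abs_of_pos hcoef] at h2
        exact h2
      have hmval : m - b = c * ‖v‖ := by
        have hne : m - b ≠ 0 := by linarith
        field_simp at hnorm
        nlinarith
      rw [hσv, hmval]
      congr 1
      field_simp
  · rintro (⟨hv, hσ⟩ | ⟨hv, hσ⟩)
    · have : m = b := by
        rw [hm, hv, smul_zero, add_zero]
        exact max_eq_left hσ
      rw [this, hv, smul_zero, add_zero, sub_self]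
    · have hvn : (0:ℝ) < ‖v‖ := norm_pos_iff.mpr hv
      have hsum : σ + c • v = ((b + c * ‖v‖) / ‖v‖) • v := by
        rw [hσ, ← add_smul]
        congr 1
        field_simp
      have hns : ‖σ + c • v‖ = b + c * ‖v‖ := by
        rw [hsum, norm_smul, Real.norm_eq_abs, abs_of_pos (by positivity)]
        field_simp
      have hmval : m = b + c * ‖v‖ := by
        rw [hm, hns, max_eq_right (by nlinarith)]
      rw [hmval, hsum, hσ, smul_smul, smul_smul, sub_eq_zero]
      congr 1
      field_simp
end

section
/- Let d ≥ 1, c > 0, F > 0 (friction coefficient), and let σ⊥, u⊥, g ∈ ℝ and σ∥, v ∈ ℝ^d. Set the friction bound b = -F·σ⊥ and suppose the normal condition -σ⊥ - max(0, -σ⊥ - c·(u⊥ - g)) = 0 holds, together with the tangential condition: if b ≤ 0 then σ∥ = 0, and if b > 0 then σ∥ · max(b, ‖σ∥ + c·v‖) - b·(σ∥ + c·v) = 0. Then the fracture cell is in exactly one of the following states: (open) σ⊥ = 0 and σ∥ = 0; (sticking) σ⊥ < 0, u⊥ = g, v = 0 and ‖σ∥‖ ≤ -F·σ⊥; or (sliding)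 σ⊥ < 0, u⊥ = g, v ≠ 0 and σ∥ = (-F·σ⊥/‖v‖)·v. -/
/-- Under the normal and tangential complementarity conditions with friction
bound `b = -F σ⊥`, a fracture cell is in exactly one of the states: open,
sticking, or sliding. -/
theorem fracture_cell_trichotomy
    (d : ℕ) (hd : 1 ≤ d) (c F : ℝ) (hc : 0 < c) (hF : 0 < F)
    (σn un g : ℝ) (σt v : EuclideanSpace ℝ (Fin d))
    (hnormal : -σn - max 0 (-σn - c * (un - g)) = 0)
    (htang_open : -F * σn ≤ 0 → σt = 0)
    (htang_closed : 0 < -F * σn →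
      (max (-F * σn) ‖σt + c • v‖) • σt - (-F * σn) • (σt + c • v) = 0) :
    ((σn = 0 ∧ σt = 0) ∨
      (σn < 0 ∧ un = g ∧ v = 0 ∧ ‖σt‖ ≤ -F * σn) ∨
      (σn < 0 ∧ un = g ∧ v ≠ 0 ∧ σt = (-F * σn / ‖v‖) • v)) ∧
    ¬((σn = 0 ∧ σt = 0) ∧
        (σn < 0 ∧ un = g ∧ v = 0 ∧ ‖σt‖ ≤ -F * σn)) ∧
    ¬((σn = 0 ∧ σt = 0) ∧
        (σn < 0 ∧ un = g ∧ v ≠ 0 ∧ σt = (-F * σn / ‖v‖) • v)) ∧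
    ¬((σn < 0 ∧ un = g ∧ v = 0 ∧ ‖σt‖ ≤ -F * σn) ∧
        (σn < 0 ∧ un = g ∧ v ≠ 0 ∧ σt = (-F * σn / ‖v‖) • v)) := by
  have hmax : -σn = max 0 (-σn - c * (un - g)) := by linarith
  have hσn_le : σn ≤ 0 := by
    have h := le_max_left 0 (-σn - c * (un - g)); linarith
  refine ⟨?_, ?_, ?_, ?_⟩
  · rcases eq_or_lt_of_le hσn_le with h0 | hneg
    · left
      exact ⟨h0, htang_open (by simp [h0])⟩
    · -- closed fracture: σn < 0
      set b : ℝ := -F * σn with hbdef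
      have hb : 0 < b := by
        have : 0 < F * (-σn) := mul_pos hF (by linarith)
        simp [hbdef]; nlinarith
      have hug : un = g := by
        rcases max_cases 0 (-σn - c * (un - g)) with ⟨h1, h2⟩ | ⟨h1, h2⟩
        · rw [h1] at hmax; linarith
        · rw [h1] at hmax
          have hcg : c * (un - g) = 0 := by linarith
          have := (mul_eq_zero.mp hcg).resolve_left (ne_of_gt hc)
          linarith
      have htang := htang_closed hb
      by_cases hv : v = 0
      · -- sticking
        right; left
        subst hv
        simp only [smul_zero, add_zero] at htang
        have hkey : (max b ‖σt‖ - b) • σt = 0 := by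
          rw [sub_smul, htang]
        rcases smul_eq_zero.mp hkey with hM | hσt
        · have hMb : max b ‖σt‖ = b := by linarith
          have : ‖σt‖ ≤ max b ‖σt‖ := le_max_right _ _
          exact ⟨hneg, hug, rfl, by rw [hMb] at this; exact this⟩
        · rw [hσt]
          exact ⟨hneg, hug, rfl, by simpa using hb.le⟩
      · -- sliding
        right; right
        set M : ℝ := max b ‖σt + c • v‖ with hMdef
        have hbM : b ≤ M := le_max_left _ _
        have hkey : (M - b) • σt = (b * c) • v := by
          rw [sub_eq_zero] at htang
          rw [smul_add, smul_smul] at htang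
          rw [sub_smul, htang]; abel
        have hMb : M ≠ b := by
          intro h
          rw [h, sub_self, zero_smul] at hkey
          rcases smul_eq_zero.mp hkey.symm with h1 | h1
          · nlinarith [mul_pos hb hc]
          · exact hv h1
        have hMgt : b < M := lt_of_le_of_ne hbM (Ne.symm hMb)
        have hsub : M - b ≠ 0 := sub_ne_zero.mpr hMb
        have hσt : σt = (b * c / (M - b)) • v := by
          have : (M - b)⁻¹ • ((M - b) • σt) = (M - b)⁻¹ • ((b * c) • v) := by
            rw [hkey]
          rw [smul_smul, inv_mul_cancel₀ hsub, one_smul, smul_smul] at this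
          rw [this]; congr 1; field_simp
        have hsum : σt + c • v = (b * c / (M - b) + c) • v := by
          rw [hσt, add_smul]
        have hnv : 0 < ‖v‖ := norm_pos_iff.mpr hv
        have hspos : 0 < b * c / (M - b) + c := by
          have : 0 < b * c / (M - b) := div_pos (mul_pos hb hc) (by linarith)
          linarith
        have hnorm : ‖σt + c • v‖ = (b * c / (M - b) + c) * ‖v‖ := by
          rw [hsum, norm_smul, Real.norm_eq_abs, abs_of_pos hspos]
        have hMeq : M = ‖σt + c • v‖ := by
          rcases max_choice b ‖σt + c • v‖ with h | h
          · exact absurd h hMb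
          · exact h
        have hM2 : M = (b * c / (M - b) + c) * ‖v‖ := hMeq.trans hnorm
        have hMpos : 0 < M := lt_trans hb hMgt
        have hfinal : M - b = c * ‖v‖ := by
          have h3 : M * (M - b) = (b * c + c * (M - b)) * ‖v‖ := by
            field_simp at hM2
            linarith [hM2]
          have h4 : M * ((M - b) - c * ‖v‖) = 0 := by ring_nf; nlinarith [h3]
          have := (mul_eq_zero.mp h4).resolve_left (ne_of_gt hMpos)
          linarith
        refine ⟨hneg, hug, hv, ?_⟩
        rw [hσt, hfinal]
        congr 1
        rw [hbdef]
        field_simp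
  · rintro ⟨⟨h0, -⟩, ⟨hn, -⟩⟩; linarith
  · rintro ⟨⟨h0, -⟩, ⟨hn, -⟩⟩; linarith
  · rintro ⟨⟨-, -, hv0, -⟩, ⟨-, -, hvne, -⟩⟩; exact hvne hv0
end
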